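/- The bound in the previous proposition is tight: for every integers d ≥ 1 and q ≥ 1 there exists an additive chore valuation (namely qd+1 chores each of value -1) such that MMS^d(M) = -(q+1) and MMS^{qd+1}(M) = -1, so MMS^d(M) < q · MMS^{qd+1}(M). -/

import Mathlib

open Finset

/-- The 1-out-of-`d` maximin share of an agent with additive valuation `v`
over `m` items: the maximum over partitions of the items into `d` bundles
of the minimum bundle value. -/
noncomputable def MMS {m : ℕ} (d : ℕ) (v : Fin m → ℝ) : ℝ :=
  ⨆ P : Fin m → Fin d, ⨅ j : Fin d, ∑ i ∈ Finset.univ.filter (fun i => P i = j), v i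

lemma MMS_const_neg_one (m d k : ℕ) (hd : 0 < d)
    (hub : ∀ P : Fin m → Fin d, ∃ j, k ≤ (Finset.univ.filter (fun i => P i = j)).card)
    (hex : ∃ P : Fin m → Fin d, ∀ j, (Finset.univ.filter (fun i => P i = j)).card ≤ k) :
    MMS d (fun _ : Fin m => (-1 : ℝ)) = -(k : ℝ) := by
  have hdne : Nonempty (Fin d) := ⟨⟨0, hd⟩⟩
  have hsum : ∀ (P : Fin m → Fin d) (j : Fin d),
      ∑ i ∈ Finset.univ.filter (fun i => P i = j), (-1 : ℝ)
        = -(((Finset.univ.filter (fun i => P i = j)).card : ℝ)) := by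
    intro P j
    simp
  unfold MMS
  apply le_antisymm
  · apply ciSup_le
    intro P
    obtain ⟨j, hj⟩ := hub P
    calc (⨅ j : Fin d, ∑ i ∈ Finset.univ.filter (fun i => P i = j), (-1:ℝ))
        ≤ ∑ i ∈ Finset.univ.filter (fun i => P i = j), (-1:ℝ) :=
          ciInf_le (Finite.bddBelow_range _) j
      _ = -(((Finset.univ.filter (fun i => P i = j)).card : ℝ)) := hsum P j
      _ ≤ -(k : ℝ) := by
          have : (k : ℝ) ≤ ((Finset.univ.filter (fun i => P i = j)).card : ℝ) :=
            Nat.cast_le.mpr hj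
          linarith
  · obtain ⟨P, hP⟩ := hex
    refine le_trans ?_ (le_ciSup (Finite.bddAbove_range _) P)
    apply le_ciInf
    intro j
    rw [hsum P j]
    have : ((Finset.univ.filter (fun i => P i = j)).card : ℝ) ≤ (k : ℝ) :=
      Nat.cast_le.mpr (hP j)
    linarith

/-- Tightness of `MMS^d ≥ q · MMS^{qd}`: with `q*d+1` chores each of value `-1`,
`MMS^d = -(q+1)` and `MMS^{qd+1} = -1`, so `MMS^d < q · MMS^{qd+1}`. -/
theorem stmt4 (d q : ℕ) (hd : 1 ≤ d) (hq : 1 ≤ q) :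
    MMS d (fun _ : Fin (q * d + 1) => (-1 : ℝ)) = -((q : ℝ) + 1) ∧
    MMS (q * d + 1) (fun _ : Fin (q * d + 1) => (-1 : ℝ)) = -1 ∧
    MMS d (fun _ : Fin (q * d + 1) => (-1 : ℝ)) <
      (q : ℝ) * MMS (q * d + 1) (fun _ : Fin (q * d + 1) => (-1 : ℝ)) := by
  have hdpos : 0 < d := hd
  have h1 : MMS d (fun _ : Fin (q * d + 1) => (-1 : ℝ)) = -((q : ℝ) + 1) := by
    have := MMS_const_neg_one (q * d + 1) d (q + 1) hdpos
      (by
        intro P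
        by_contra h
        push_neg at h
        have hcards : ∀ j, (Finset.univ.filter (fun i => P i = j)).card ≤ q := by
          intro j; exact Nat.lt_succ_iff.mp (h j)
        have hsum : (Finset.univ : Finset (Fin (q * d + 1))).card
            = ∑ j : Fin d, (Finset.univ.filter (fun i => P i = j)).card :=
          Finset.card_eq_sum_card_fiberwise (fun x _ => Finset.mem_univ (P x))
        have : q * d + 1 ≤ q * d := by
          calc q * d + 1 = (Finset.univ : Finset (Fin (q * d + 1))).card := by simp
            _ = ∑ j : Fin d, (Finset.univ.filter (fun i => P i = j)).card := hsum
            _ ≤ ∑ _j : Fin d, q := Finset.sum_le_sum fun j _ => hcards j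
            _ = d * q := by simp [Finset.sum_const, mul_comm]
            _ = q * d := mul_comm d q
        omega)
      (by
        refine ⟨fun i => ⟨i.val % d, Nat.mod_lt _ hdpos⟩, fun j => ?_⟩
        have : (Finset.univ.filter
            (fun i : Fin (q*d+1) => (⟨i.val % d, Nat.mod_lt _ hdpos⟩ : Fin d) = j)).card
            ≤ (Finset.range (q + 1)).card := by
          apply Finset.card_le_card_of_injOn (fun i => i.val / d)
          · intro i hi
            simp only [Finset.mem_coe, Finset.mem_range, Nat.lt_succ_iff]
            have hi' : i.val ≤ q * d := Nat.lt_succ_iff.mp i.isLt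
            calc i.val / d ≤ q * d / d := Nat.div_le_div_right hi'
              _ = q := Nat.mul_div_cancel q hdpos
          · intro a ha b hb hab
            have ha2 : a.val % d = j.val := by
              have h := (Finset.mem_filter.mp ha).2
              simpa [Fin.ext_iff] using h
            have hb2 : b.val % d = j.val := by
              have h := (Finset.mem_filter.mp hb).2
              simpa [Fin.ext_iff] using h
            have hab2 : a.val / d = b.val / d := by simpa using hab
            apply Fin.ext
            conv_lhs => rw [← Nat.div_add_mod a.val d]
            conv_rhs => rw [← Nat.div_add_mod b.val d]
            rw [hab2, ha2, hb2]
        simpa using this)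
    convert this using 2
    push_cast
    ring
  have h2 : MMS (q * d + 1) (fun _ : Fin (q * d + 1) => (-1 : ℝ)) = -1 := by
    have := MMS_const_neg_one (q * d + 1) (q * d + 1) 1 (by omega)
      (by
        intro P
        by_contra h
        push_neg at h
        have hcards : ∀ j, (Finset.univ.filter (fun i => P i = j)).card = 0 := by
          intro j; exact Nat.lt_one_iff.mp (h j)
        have hsum : (Finset.univ : Finset (Fin (q * d + 1))).card
            = ∑ j : Fin (q*d+1), (Finset.univ.filter (fun i => P i = j)).card :=
          Finset.card_eq_sum_card_fiberwise (fun x _ => Finset.mem_univ (P x))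
        have : q * d + 1 = 0 := by
          calc q * d + 1 = (Finset.univ : Finset (Fin (q * d + 1))).card := by simp
            _ = ∑ j : Fin (q*d+1), (Finset.univ.filter (fun i => P i = j)).card := hsum
            _ = 0 := Finset.sum_eq_zero fun j _ => hcards j
        omega
      )
      ⟨id, fun j => by simp [Finset.filter_eq']⟩
    simpa using this
  refine ⟨h1, h2, ?_⟩
  rw [h1, h2]
  have : (0:ℝ) < 1 := one_pos
  push_cast
  nlinarith [hq, hd]
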